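/- Let ε > 0 and let 𝕂 be a Cantor set in ℝ. Let (𝕂(n))_{n∈ℕ} be a monotone slow subdivision of 𝕂 (i.e. a slow subdivision whose ordered holes B₀, B₁, B₂, … satisfy |B_{n+1}| ≤ |B_n| for all n). If 𝕂 admits some slow subdivision satisfying the ε-stable gap condition, then the monotone slow subdivision (𝕂(n))_{n∈ℕ} itself satisfies the ε-stable gap condition. -/
import Mathlib


noncomputable section

/-- A Cantor set in `ℝ`: a nonempty compact, perfect, totally disconnected subset. -/
def IsCantorSet (C : Set ℝ) : Prop :=
  C.Nonempty ∧ IsCompact C ∧ Perfect C ∧ IsTotallyDisconnected C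

/-- A slow subdivision of a set `C ⊆ ℝ`: a decreasing family of closed sets `level n`,
each the union of `n+1` disjoint compact intervals, starting from
`level 0 = [min C, max C]`, where `level (n+1)` is obtained from `level n` by removing
exactly one nonempty open interval `(e n, f n)` from the connected component
`[a n, b n]` of `level n`, leaving the two disjoint nonempty closed intervals
`[a n, e n]` and `[f n, b n]`; the total intersection is `C`. -/
structure SlowSubdivision (C : Set ℝ) where
  level : ℕ → Set ℝ
  subset_succ : ∀ n, level (n + 1) ⊆ level n
  level_zero : level 0 = Set.Icc (sInf C) (sSup C)
  pieces : ∀ n, ∃ I : Fin (n + 1) → ℝ × ℝ,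
    (∀ i, (I i).1 ≤ (I i).2) ∧
    (∀ i j, i ≠ j → Disjoint (Set.Icc (I i).1 (I i).2) (Set.Icc (I j).1 (I j).2)) ∧
    level n = ⋃ i, Set.Icc (I i).1 (I i).2
  a : ℕ → ℝ
  e : ℕ → ℝ
  f : ℕ → ℝ
  b : ℕ → ℝ
  a_le_e : ∀ n, a n ≤ e n
  e_lt_f : ∀ n, e n < f n
  f_le_b : ∀ n, f n ≤ b n
  component : ∀ n, connectedComponentIn (level n) (a n) = Set.Icc (a n) (b n)
  level_succ : ∀ n, level (n + 1) = level n \ Set.Ioo (e n) (f n)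
  iInter_level : ⋂ n, level n = C


namespace SlowSubdivision

variable {C : Set ℝ} (u : SlowSubdivision C)

lemma level_antitone : Antitone u.level :=
  antitone_nat_of_succ_le u.subset_succ

lemma C_subset (n : ℕ) : C ⊆ u.level n :=
  u.iInter_level.symm.trans_subset (Set.iInter_subset _ n)

lemma comp_subset (n : ℕ) : Set.Icc (u.a n) (u.b n) ⊆ u.level n := by
  rw [← u.component n]; exact connectedComponentIn_subset _ _

lemma a_le_b (n : ℕ) : u.a n ≤ u.b n :=
  (u.a_le_e n).trans ((u.e_lt_f n).le.trans (u.f_le_b n))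

lemma hole_disjoint {n m : ℕ} (h : n < m) {z : ℝ}
    (hz : z ∈ Set.Ioo (u.e n) (u.f n)) : z ∉ u.level m := by
  intro hzm
  have : z ∈ u.level (n + 1) := u.level_antitone h hzm
  rw [u.level_succ n] at this
  exact this.2 hz

lemma hole_disjoint_C (n : ℕ) {z : ℝ}
    (hz : z ∈ Set.Ioo (u.e n) (u.f n)) : z ∉ C := fun hzC =>
  u.hole_disjoint (Nat.lt_succ_self n) hz (u.C_subset (n+1) hzC)

lemma e_mem_level (n m : ℕ) : u.e n ∈ u.level m := by
  have base : u.e n ∈ u.level (n + 1) := by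
    rw [u.level_succ n]
    refine ⟨u.comp_subset n ⟨u.a_le_e n, (u.e_lt_f n).le.trans (u.f_le_b n)⟩, ?_⟩
    rintro ⟨h1, -⟩; exact lt_irrefl _ h1
  rcases le_or_gt m (n + 1) with hm | hm
  · exact u.level_antitone hm base
  · -- induction above n+1
    have key : ∀ j, u.e n ∈ u.level (n + 1 + j) := by
      intro j
      induction j with
      | zero => exact base
      | succ j ih =>
        rw [show n + 1 + (j+1) = (n+1+j) + 1 from rfl, u.level_succ]
        refine ⟨ih, ?_⟩
        rintro ⟨h1, h2⟩
        set m' := n + 1 + j with hm'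
        -- pick z in (e n, min (f n) (f m'))
        have hnm' : n < m' := by omega
        have hlt : u.e n < min (u.f n) (u.f m') := lt_min (u.e_lt_f n) h2
        set z := (u.e n + min (u.f n) (u.f m')) / 2 with hzdef
        have hz1 : u.e n < z := by simp only [hzdef]; linarith
        have hz2 : z < min (u.f n) (u.f m') := by simp only [hzdef]; linarith
        have hzIoo : z ∈ Set.Ioo (u.e n) (u.f n) := ⟨hz1, hz2.trans_le (min_le_left _ _)⟩
        have hzlev : z ∈ u.level m' := u.comp_subset m'
          ⟨((u.a_le_e m').trans h1.le).trans hz1.le,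
            (hz2.trans_le (min_le_right _ _)).le.trans (u.f_le_b m')⟩
        exact u.hole_disjoint hnm' hzIoo hzlev
    obtain ⟨j, rfl⟩ : ∃ j, m = n + 1 + j := ⟨m - (n+1), by omega⟩
    exact key j

lemma e_mem_C (n : ℕ) : u.e n ∈ C :=
  u.iInter_level.subset (Set.mem_iInter.2 fun m => u.e_mem_level n m)

lemma f_mem_level (n m : ℕ) : u.f n ∈ u.level m := by
  have base : u.f n ∈ u.level (n + 1) := by
    rw [u.level_succ n]
    refine ⟨u.comp_subset n ⟨(u.a_le_e n).trans (u.e_lt_f n).le, u.f_le_b n⟩, ?_⟩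
    rintro ⟨-, h2⟩; exact lt_irrefl _ h2
  rcases le_or_gt m (n + 1) with hm | hm
  · exact u.level_antitone hm base
  · have key : ∀ j, u.f n ∈ u.level (n + 1 + j) := by
      intro j
      induction j with
      | zero => exact base
      | succ j ih =>
        rw [show n + 1 + (j+1) = (n+1+j) + 1 from rfl, u.level_succ]
        refine ⟨ih, ?_⟩
        rintro ⟨h1, h2⟩
        set m' := n + 1 + j with hm'
        have hnm' : n < m' := by omega
        have hlt : max (u.e n) (u.e m') < u.f n := max_lt (u.e_lt_f n) h1
        set z := (max (u.e n) (u.e m') + u.f n) / 2 with hzdef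
        have hz1 : max (u.e n) (u.e m') < z := by simp only [hzdef]; linarith
        have hz2 : z < u.f n := by simp only [hzdef]; linarith
        have hzIoo : z ∈ Set.Ioo (u.e n) (u.f n) := ⟨(le_max_left _ _).trans_lt hz1, hz2⟩
        have hzlev : z ∈ u.level m' := u.comp_subset m'
          ⟨(u.a_le_e m').trans (((le_max_right _ _).trans_lt hz1).le),
            (hz2.trans h2).le.trans (u.f_le_b m')⟩
        exact u.hole_disjoint hnm' hzIoo hzlev
    obtain ⟨j, rfl⟩ : ∃ j, m = n + 1 + j := ⟨m - (n+1), by omega⟩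
    exact key j

lemma f_mem_C (n : ℕ) : u.f n ∈ C :=
  u.iInter_level.subset (Set.mem_iInter.2 fun m => u.f_mem_level n m)



lemma a_mem_level (n m : ℕ) : u.a n ∈ u.level m := by
  have base : u.a n ∈ u.level n := u.comp_subset n ⟨le_rfl, u.a_le_b n⟩
  rcases le_or_gt m n with hm | hm
  · exact u.level_antitone hm base
  · have key : ∀ j, u.a n ∈ u.level (n + j) := by
      intro j
      induction j with
      | zero => exact base
      | succ j ih =>
        rw [show n + (j+1) = (n+j) + 1 from rfl, u.level_succ]
        refine ⟨ih, ?_⟩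
        rintro ⟨h1, h2⟩
        set m' := n + j with hm'
        -- Icc (a m') (a n) ⊆ level n, connected, contains a n
        have hsub : Set.Icc (u.a m') (u.a n) ⊆ u.level n := fun x hx =>
          u.level_antitone (by omega : n ≤ m') (u.comp_subset m'
            ⟨hx.1, hx.2.trans (h2.le.trans (u.f_le_b m'))⟩)
        have hxmem : u.a n ∈ Set.Icc (u.a m') (u.a n) :=
          ⟨((u.a_le_e m').trans h1.le), le_rfl⟩
        have := (isPreconnected_Icc).subset_connectedComponentIn hxmem hsub
        rw [u.component n] at this
        have h3 : u.a m' ≤ u.a n := (u.a_le_e m').trans h1.le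
        have h4 := (this ⟨le_rfl, h3⟩).1
        exact absurd h4 (not_le.2 ((u.a_le_e m').trans_lt h1))
    obtain ⟨j, rfl⟩ : ∃ j, m = n + j := ⟨m - n, by omega⟩
    exact key j

lemma b_mem_level (n m : ℕ) : u.b n ∈ u.level m := by
  have base : u.b n ∈ u.level n := u.comp_subset n ⟨u.a_le_b n, le_rfl⟩
  rcases le_or_gt m n with hm | hm
  · exact u.level_antitone hm base
  · have key : ∀ j, u.b n ∈ u.level (n + j) := by
      intro j
      induction j with
      | zero => exact base
      | succ j ih =>
        rw [show n + (j+1) = (n+j) + 1 from rfl, u.level_succ]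
        refine ⟨ih, ?_⟩
        rintro ⟨h1, h2⟩
        set m' := n + j with hm'
        have h3 : u.b n ≤ u.b m' := h2.le.trans (u.f_le_b m')
        have hsub : Set.Icc (u.b n) (u.b m') ⊆ u.level n := fun x hx =>
          u.level_antitone (by omega : n ≤ m') (u.comp_subset m'
            ⟨(u.a_le_e m').trans (h1.le.trans hx.1), hx.2⟩)
        have hcc : connectedComponentIn (u.level n) (u.b n) = Set.Icc (u.a n) (u.b n) := by
          rw [← connectedComponentIn_eq (x := u.a n)
            (by rw [u.component n]; exact ⟨u.a_le_b n, le_rfl⟩), u.component n]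
        have hxmem : u.b n ∈ Set.Icc (u.b n) (u.b m') := ⟨le_rfl, h3⟩
        have := (isPreconnected_Icc).subset_connectedComponentIn hxmem hsub
        rw [hcc] at this
        have h4 := (this ⟨h3, le_rfl⟩).2
        exact absurd h4 (not_le.2 (h2.trans_le (u.f_le_b m')))
    obtain ⟨j, rfl⟩ : ∃ j, m = n + j := ⟨m - n, by omega⟩
    exact key j

lemma a_mem_C (n : ℕ) : u.a n ∈ C :=
  u.iInter_level.subset (Set.mem_iInter.2 fun m => u.a_mem_level n m)

lemma b_mem_C (n : ℕ) : u.b n ∈ C :=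
  u.iInter_level.subset (Set.mem_iInter.2 fun m => u.b_mem_level n m)

lemma level_eq (n : ℕ) : u.level n =
    Set.Icc (sInf C) (sSup C) \ ⋃ k ∈ Finset.range n, Set.Ioo (u.e k) (u.f k) := by
  induction n with
  | zero => simp [u.level_zero]
  | succ n ih =>
    rw [u.level_succ, ih, Set.diff_diff, Finset.range_add_one]
    congr 1
    simp [Set.biUnion_insert, Set.union_comm]

lemma a_mem_Icc (n : ℕ) : u.a n ∈ Set.Icc (sInf C) (sSup C) := by
  have := u.a_mem_level n 0; rwa [u.level_zero] at this

lemma b_mem_Icc (n : ℕ) : u.b n ∈ Set.Icc (sInf C) (sSup C) := by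
  have := u.b_mem_level n 0; rwa [u.level_zero] at this

lemma exists_left_hole (n : ℕ) (h : u.a n ≠ sInf C) : ∃ k < n, u.f k = u.a n := by
  have hIa : sInf C ≤ u.a n := (u.a_mem_Icc n).1
  have hInf_lt : sInf C < u.a n := lt_of_le_of_ne hIa (Ne.symm h)
  have step : ∀ x, sInf C ≤ x → x < u.a n → ∃ k < n, x < u.f k ∧ u.f k ≤ u.a n := by
    intro x hx1 hx2
    have hnot : ¬ Set.Icc x (u.a n) ⊆ u.level n := by
      intro hsub
      have hmem : u.a n ∈ Set.Icc x (u.a n) := ⟨hx2.le, le_rfl⟩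
      have := (isPreconnected_Icc).subset_connectedComponentIn hmem hsub
      rw [u.component n] at this
      exact absurd (this ⟨le_rfl, hx2.le⟩).1 (not_le.2 hx2)
    obtain ⟨y, hy, hyn⟩ := Set.not_subset.1 hnot
    rw [u.level_eq n] at hyn
    have hyIcc : y ∈ Set.Icc (sInf C) (sSup C) :=
      ⟨hx1.trans hy.1, hy.2.trans (u.a_mem_Icc n).2⟩
    have hyU : y ∈ ⋃ k ∈ Finset.range n, Set.Ioo (u.e k) (u.f k) := by
      by_contra hcon; exact hyn ⟨hyIcc, hcon⟩
    simp only [Set.mem_iUnion, Finset.mem_range, exists_prop] at hyU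
    obtain ⟨k, hk, hyk⟩ := hyU
    have han : u.a n ∉ Set.Ioo (u.e k) (u.f k) := by
      intro hmem
      exact u.hole_disjoint hk hmem (u.a_mem_level n n)
    have hek : u.e k < u.a n := hyk.1.trans_le hy.2
    have hfk : u.f k ≤ u.a n := by
      by_contra hcon
      exact han ⟨hek, not_le.1 hcon⟩
    exact ⟨k, hk, hy.1.trans_lt hyk.2, hfk⟩
  set T := (Finset.range n).filter (fun k => u.f k < u.a n) with hT
  set S := insert (sInf C) (T.image u.f) with hS
  have hSne : S.Nonempty := Finset.insert_nonempty _ _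
  set x := S.max' hSne with hx
  have hx1 : sInf C ≤ x := Finset.le_max' S _ (Finset.mem_insert_self _ _)
  have hx2 : x < u.a n := by
    rw [hx, Finset.max'_lt_iff]
    intro y hy
    rcases Finset.mem_insert.1 hy with rfl | hy
    · exact hInf_lt
    · obtain ⟨k, hk, rfl⟩ := Finset.mem_image.1 hy
      exact (Finset.mem_filter.1 hk).2
  obtain ⟨k, hk, hxk, hka⟩ := step x hx1 hx2
  refine ⟨k, hk, ?_⟩
  rcases lt_or_eq_of_le hka with hlt | heq
  · exfalso
    have : k ∈ T := Finset.mem_filter.2 ⟨Finset.mem_range.2 hk, hlt⟩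
    have : u.f k ≤ x := Finset.le_max' S _
      (Finset.mem_insert_of_mem (Finset.mem_image_of_mem _ this))
    exact absurd hxk (not_lt.2 this)
  · exact heq

lemma exists_right_hole (n : ℕ) (h : u.b n ≠ sSup C) : ∃ k < n, u.e k = u.b n := by
  have hIb : u.b n ≤ sSup C := (u.b_mem_Icc n).2
  have hSup_gt : u.b n < sSup C := lt_of_le_of_ne hIb h
  have hcc : connectedComponentIn (u.level n) (u.b n) = Set.Icc (u.a n) (u.b n) := by
    rw [← connectedComponentIn_eq (x := u.a n)
      (by rw [u.component n]; exact ⟨u.a_le_b n, le_rfl⟩), u.component n]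
  have step : ∀ x, x ≤ sSup C → u.b n < x → ∃ k < n, u.e k < x ∧ u.b n ≤ u.e k := by
    intro x hx1 hx2
    have hnot : ¬ Set.Icc (u.b n) x ⊆ u.level n := by
      intro hsub
      have hmem : u.b n ∈ Set.Icc (u.b n) x := ⟨le_rfl, hx2.le⟩
      have := (isPreconnected_Icc).subset_connectedComponentIn hmem hsub
      rw [hcc] at this
      exact absurd (this ⟨hx2.le, le_rfl⟩).2 (not_le.2 hx2)
    obtain ⟨y, hy, hyn⟩ := Set.not_subset.1 hnot
    rw [u.level_eq n] at hyn
    have hyIcc : y ∈ Set.Icc (sInf C) (sSup C) :=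
      ⟨(u.b_mem_Icc n).1.trans hy.1, hy.2.trans hx1⟩
    have hyU : y ∈ ⋃ k ∈ Finset.range n, Set.Ioo (u.e k) (u.f k) := by
      by_contra hcon; exact hyn ⟨hyIcc, hcon⟩
    simp only [Set.mem_iUnion, Finset.mem_range, exists_prop] at hyU
    obtain ⟨k, hk, hyk⟩ := hyU
    have hbn : u.b n ∉ Set.Ioo (u.e k) (u.f k) := by
      intro hmem
      exact u.hole_disjoint hk hmem (u.b_mem_level n n)
    have hfk : u.b n < u.f k := hy.1.trans_lt hyk.2
    have hek : u.b n ≤ u.e k := by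
      by_contra hcon
      exact hbn ⟨not_le.1 hcon, hfk⟩
    exact ⟨k, hk, hyk.1.trans_le hy.2, hek⟩
  set T := (Finset.range n).filter (fun k => u.b n < u.e k) with hT
  set S := insert (sSup C) (T.image u.e) with hS
  have hSne : S.Nonempty := Finset.insert_nonempty _ _
  set x := S.min' hSne with hx
  have hx1 : x ≤ sSup C := Finset.min'_le S _ (Finset.mem_insert_self _ _)
  have hx2 : u.b n < x := by
    rw [hx, Finset.lt_min'_iff]
    intro y hy
    rcases Finset.mem_insert.1 hy with rfl | hy
    · exact hSup_gt
    · obtain ⟨k, hk, rfl⟩ := Finset.mem_image.1 hy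
      exact (Finset.mem_filter.1 hk).2
  obtain ⟨k, hk, hxk, hka⟩ := step x hx1 hx2
  refine ⟨k, hk, ?_⟩
  rcases lt_or_eq_of_le hka with hlt | heq
  · exfalso
    have : k ∈ T := Finset.mem_filter.2 ⟨Finset.mem_range.2 hk, hlt⟩
    have : x ≤ u.e k := Finset.min'_le S _
      (Finset.mem_insert_of_mem (Finset.mem_image_of_mem _ this))
    exact absurd hxk (not_lt.2 this)
  · exact heq.symm

lemma exists_stage (hbb : BddBelow C) (hba : BddAbove C) {x y : ℝ}
    (hu : x ∈ C) (hv : y ∈ C) (huv : x < y)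
    (hhole : ∀ z ∈ Set.Ioo x y, z ∉ C) : ∃ m, u.e m = x ∧ u.f m = y := by
  classical
  set c := (x + y) / 2 with hc
  have hcx : x < c := by rw [hc]; linarith
  have hcy : c < y := by rw [hc]; linarith
  have hcC : c ∉ C := hhole c ⟨hcx, hcy⟩
  have hc0 : c ∈ u.level 0 := by
    rw [u.level_zero]
    exact ⟨(csInf_le hbb hu).trans hcx.le, hcy.le.trans (le_csSup hba hv)⟩
  have hex : ∃ m, c ∉ u.level m := by
    by_contra hcon
    push_neg at hcon
    exact hcC (u.iInter_level.subset (Set.mem_iInter.2 hcon))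
  set m0 := Nat.find hex with hm0
  have hspec : c ∉ u.level m0 := Nat.find_spec hex
  have hm0ne : m0 ≠ 0 := fun h => by rw [h] at hspec; exact hspec hc0
  obtain ⟨m, hm⟩ : ∃ m, m0 = m + 1 := ⟨m0 - 1, by omega⟩
  have hcm : c ∈ u.level m := by
    by_contra hcon
    have h9 := Nat.find_min' hex hcon
    rw [← hm0] at h9
    omega
  have hcIoo : c ∈ Set.Ioo (u.e m) (u.f m) := by
    rw [hm, u.level_succ] at hspec
    by_contra hcon
    exact hspec ⟨hcm, hcon⟩
  refine ⟨m, ?_, ?_⟩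
  · rcases lt_trichotomy (u.e m) x with hlt | heq | hgt
    · exact absurd hu (u.hole_disjoint_C m ⟨hlt, hcx.trans hcIoo.2⟩)
    · exact heq
    · exact absurd (u.e_mem_C m) (hhole _ ⟨hgt, hcIoo.1.trans hcy⟩)
  · rcases lt_trichotomy (u.f m) y with hlt | heq | hgt
    · exact absurd (u.f_mem_C m) (hhole _ ⟨hcx.trans hcIoo.2, hlt⟩)
    · exact heq
    · exact absurd hv (u.hole_disjoint_C m ⟨hcIoo.1.trans hcy, hgt⟩)

end SlowSubdivision
/-- The `ε`-stable gap condition for a slow subdivision: at every stage, the removed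
hole `B = (e n, f n)` and the adjacent intervals `K^L = [a n, e n]`, `K^R = [f n, b n]`
satisfy `|B| < (1−ε)|K^L|` and `|B| < (1−ε)|K^R|`. -/
def StableGapCond (ε : ℝ) {C : Set ℝ} (s : SlowSubdivision C) : Prop :=
  ∀ n, s.f n - s.e n < (1 - ε) * (s.e n - s.a n) ∧
    s.f n - s.e n < (1 - ε) * (s.b n - s.f n)

/-- A Cantor set satisfies the `ε`-stable gap condition if it admits a slow subdivision
satisfying it. -/
def HasStableGap (ε : ℝ) (C : Set ℝ) : Prop :=
  ∃ s : SlowSubdivision C, StableGapCond ε s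

/-- `B` is a hole of `C`: a (bounded) connected component of the complement of `C`
contained in `[min C, max C]`. -/
def IsHole (C B : Set ℝ) : Prop :=
  (∃ x ∈ B, connectedComponentIn Cᶜ x = B) ∧ B ⊆ Set.Icc (sInf C) (sSup C)

/-- The pair `(K, F)` satisfies the `ε`-size condition: every hole of each set has
length at most `(1−ε)` times the length of the other set. -/
def SizeCond (ε : ℝ) (K F : Set ℝ) : Prop :=
  (∀ B, IsHole K B → sSup B - sInf B ≤ (1 - ε) * (sSup F - sInf F)) ∧
  (∀ B, IsHole F B → sSup B - sInf B ≤ (1 - ε) * (sSup K - sInf K))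

/-- If a Cantor set admits some slow subdivision satisfying the `ε`-stable gap
condition, then any monotone slow subdivision of it (one whose ordered holes have
non-increasing lengths) satisfies the `ε`-stable gap condition as well. -/
theorem monotone_slow_subdivision_stable_gap (ε : ℝ) (hε : 0 < ε)
    (C : Set ℝ) (hC : IsCantorSet C)
    (s : SlowSubdivision C)
    (hmono : ∀ n, s.f (n + 1) - s.e (n + 1) ≤ s.f n - s.e n)
    (h : HasStableGap ε C) :
    StableGapCond ε s := by
  obtain ⟨t, hstab⟩ := h
  obtain ⟨-, hcpt, -, -⟩ := hC
  have hbb : BddBelow C := hcpt.bddBelow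
  have hba : BddAbove C := hcpt.bddAbove
  have h1ε : 0 < 1 - ε := by
    have h1 := (hstab 0).1
    have h2 := t.e_lt_f 0
    have h3 := t.a_le_e 0
    nlinarith
  have hanti : ∀ k n : ℕ, k ≤ n → s.f n - s.e n ≤ s.f k - s.e k :=
    fun k n hkn => antitone_nat_of_succ_le (f := fun n => s.f n - s.e n) hmono hkn
  intro n
  constructor
  · -- left inequality
    obtain ⟨m, hme, hmf⟩ := t.exists_stage hbb hba (s.e_mem_C n) (s.f_mem_C n)
      (s.e_lt_f n) (fun z hz => s.hole_disjoint_C n hz)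
    by_cases ha : s.a n = sInf C
    · have h1 := (hstab m).1
      rw [hme, hmf] at h1
      have hta : s.a n ≤ t.a m := ha ▸ (t.a_mem_Icc m).1
      calc s.f n - s.e n < (1 - ε) * (s.e n - t.a m) := h1
        _ ≤ (1 - ε) * (s.e n - s.a n) :=
            mul_le_mul_of_nonneg_left (by linarith) h1ε.le
    · obtain ⟨k, hkn, hfk⟩ := s.exists_left_hole n ha
      obtain ⟨m', hm'e, hm'f⟩ := t.exists_stage hbb hba (s.e_mem_C k) (s.f_mem_C k)
        (s.e_lt_f k) (fun z hz => s.hole_disjoint_C k hz)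
      have hekan : s.e k < s.a n := hfk ▸ s.e_lt_f k
      have hanen : s.a n ≤ s.e n := s.a_le_e n
      have hmm' : m ≠ m' := by
        intro hcon
        rw [hcon, hm'f, hfk] at hmf
        have := s.e_lt_f n
        linarith
      rcases hmm'.lt_or_gt with hlt | hlt
      · -- m < m' : use right condition of t at m'
        have htb : t.b m' ≤ s.e n := by
          by_contra hcon
          push_neg at hcon
          set w := min (s.f n) (t.b m') with hwdef
          have hw : s.e n < w := lt_min (s.e_lt_f n) hcon
          set z := (s.e n + w) / 2 with hzdef
          have hz1 : s.e n < z := by rw [hzdef]; linarith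
          have hz2 : z < w := by rw [hzdef]; linarith
          have hzIoo : z ∈ Set.Ioo (t.e m) (t.f m) := by
            rw [hme, hmf]
            exact ⟨hz1, hz2.trans_le (min_le_left _ _)⟩
          have hzlev : z ∈ t.level m' := t.comp_subset m'
            ⟨by have := t.a_le_e m'; rw [hm'e] at this; linarith,
              (hz2.trans_le (min_le_right _ _)).le⟩
          exact t.hole_disjoint hlt hzIoo hzlev
        have h2 := (hstab m').2
        rw [hm'e, hm'f] at h2
        calc s.f n - s.e n ≤ s.f k - s.e k := hanti k n hkn.le
          _ < (1 - ε) * (t.b m' - s.f k) := h2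
          _ ≤ (1 - ε) * (s.e n - s.a n) :=
              mul_le_mul_of_nonneg_left (by rw [hfk] at *; linarith) h1ε.le
      · -- m' < m : t.a m ≥ s.a n, use left condition of t at m
        have hta : s.a n ≤ t.a m := by
          by_contra hcon
          push_neg at hcon
          set w := max (t.a m) (s.e k) with hwdef
          have hw : w < s.a n := max_lt hcon hekan
          set z := (w + s.a n) / 2 with hzdef
          have hz1 : w < z := by rw [hzdef]; linarith
          have hz2 : z < s.a n := by rw [hzdef]; linarith
          have hzIoo : z ∈ Set.Ioo (t.e m') (t.f m') := by
            rw [hm'e, hm'f, hfk]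
            exact ⟨(le_max_right _ _).trans_lt hz1, hz2⟩
          have hzlev : z ∈ t.level m := t.comp_subset m
            ⟨((le_max_left _ _).trans_lt hz1).le,
              by have h4 := t.a_le_e m; have h5 := (t.e_lt_f m).le.trans (t.f_le_b m)
                 rw [hme] at h5; linarith⟩
          exact t.hole_disjoint hlt hzIoo hzlev
        have h1 := (hstab m).1
        rw [hme, hmf] at h1
        calc s.f n - s.e n < (1 - ε) * (s.e n - t.a m) := h1
          _ ≤ (1 - ε) * (s.e n - s.a n) :=
              mul_le_mul_of_nonneg_left (by linarith) h1ε.le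
  · -- right inequality
    obtain ⟨m, hme, hmf⟩ := t.exists_stage hbb hba (s.e_mem_C n) (s.f_mem_C n)
      (s.e_lt_f n) (fun z hz => s.hole_disjoint_C n hz)
    by_cases hb : s.b n = sSup C
    · have h2 := (hstab m).2
      rw [hme, hmf] at h2
      have htb : t.b m ≤ s.b n := hb ▸ (t.b_mem_Icc m).2
      calc s.f n - s.e n < (1 - ε) * (t.b m - s.f n) := h2
        _ ≤ (1 - ε) * (s.b n - s.f n) :=
            mul_le_mul_of_nonneg_left (by linarith) h1ε.le
    · obtain ⟨k, hkn, hek⟩ := s.exists_right_hole n hb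
      obtain ⟨m', hm'e, hm'f⟩ := t.exists_stage hbb hba (s.e_mem_C k) (s.f_mem_C k)
        (s.e_lt_f k) (fun z hz => s.hole_disjoint_C k hz)
      have hbfk : s.b n < s.f k := hek ▸ s.e_lt_f k
      have hfnbn : s.f n ≤ s.b n := s.f_le_b n
      have hmm' : m ≠ m' := by
        intro hcon
        rw [hcon, hm'e, hek] at hme
        have := s.e_lt_f n
        linarith
      rcases hmm'.lt_or_gt with hlt | hlt
      · -- m < m' : t.a m' ≥ s.f n, use left condition of t at m'
        have hta : s.f n ≤ t.a m' := by
          by_contra hcon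
          push_neg at hcon
          set w := max (s.e n) (t.a m') with hwdef
          have hw : w < s.f n := max_lt (s.e_lt_f n) hcon
          set z := (w + s.f n) / 2 with hzdef
          have hz1 : w < z := by rw [hzdef]; linarith
          have hz2 : z < s.f n := by rw [hzdef]; linarith
          have hzIoo : z ∈ Set.Ioo (t.e m) (t.f m) := by
            rw [hme, hmf]
            exact ⟨(le_max_left _ _).trans_lt hz1, hz2⟩
          have hzlev : z ∈ t.level m' := t.comp_subset m'
            ⟨((le_max_right _ _).trans_lt hz1).le,
              by have h4 := (t.e_lt_f m').le.trans (t.f_le_b m')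
                 rw [hm'e, hek] at h4; linarith⟩
          exact t.hole_disjoint hlt hzIoo hzlev
        have h1 := (hstab m').1
        rw [hm'e, hm'f] at h1
        calc s.f n - s.e n ≤ s.f k - s.e k := hanti k n hkn.le
          _ < (1 - ε) * (s.e k - t.a m') := h1
          _ ≤ (1 - ε) * (s.b n - s.f n) :=
              mul_le_mul_of_nonneg_left (by rw [hek] at *; linarith) h1ε.le
      · -- m' < m : t.b m ≤ s.b n, use right condition of t at m
        have htb : t.b m ≤ s.b n := by
          by_contra hcon
          push_neg at hcon
          set w := min (s.f k) (t.b m) with hwdef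
          have hw : s.b n < w := lt_min hbfk hcon
          set z := (s.b n + w) / 2 with hzdef
          have hz1 : s.b n < z := by rw [hzdef]; linarith
          have hz2 : z < w := by rw [hzdef]; linarith
          have hzIoo : z ∈ Set.Ioo (t.e m') (t.f m') := by
            rw [hm'e, hm'f, hek]
            exact ⟨hz1, hz2.trans_le (min_le_left _ _)⟩
          have hzlev : z ∈ t.level m := t.comp_subset m
            ⟨by have h4 := (t.a_le_e m).trans (t.e_lt_f m).le
                rw [hmf] at h4; linarith,
              (hz2.trans_le (min_le_right _ _)).le⟩
          exact t.hole_disjoint hlt hzIoo hzlev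
        have h2 := (hstab m).2
        rw [hme, hmf] at h2
        calc s.f n - s.e n < (1 - ε) * (t.b m - s.f n) := h2
          _ ≤ (1 - ε) * (s.b n - s.f n) :=
              mul_le_mul_of_nonneg_left (by linarith) h1ε.le
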